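/- Let S be a supercharacter theory of a finite group G and let M, N be S-normal subgroups. Then M ≤ N if and only if Irr(S | M) ⊆ Irr(S | N). -/

import Mathlib

open scoped BigOperators Pointwise

/-- `f : G → ℂ` is an irreducible character of `G`. -/
def IsIrrChar (G : Type) [Group G] [Fintype G] (f : G → ℂ) : Prop :=
  ∃ V : FDRep ℂ G, CategoryTheory.Simple V ∧ V.character = f

/-- A supercharacter theory of a finite group `G` (Diaconis–Isaacs): a partition
`parts` of the set of irreducible characters of `G` together with a partition of `G`
into `S`-classes (`cls g` is the class of `g`), such that `{1}` is a class, the number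
of parts equals the number of classes, and each supercharacter
`σ_X = ∑ χ ∈ X, χ(1)·χ` is constant on every class. -/
structure SCT (G : Type) [Group G] [Fintype G] where
  parts : Finset (Finset (G → ℂ))
  cls : G → Set G
  parts_cover : ∀ f : G → ℂ, IsIrrChar G f ↔ ∃ X ∈ parts, f ∈ X
  parts_disj : ∀ X ∈ parts, ∀ Y ∈ parts, X ≠ Y → Disjoint X Y
  parts_nonempty : ∀ X ∈ parts, X.Nonempty
  mem_cls : ∀ g : G, g ∈ cls g
  cls_eq : ∀ g h : G, h ∈ cls g → cls h = cls g
  cls_one : cls (1 : G) = {1}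
  card_eq : parts.card = Nat.card (Set.range cls)
  const : ∀ X ∈ parts, ∀ g h : G, h ∈ cls g →
    (∑ χ ∈ X, χ 1 * χ h) = (∑ χ ∈ X, χ 1 * χ g)

variable {G : Type} [Group G] [Fintype G]

namespace SCT

/-- The supercharacter attached to a part `X`. -/
noncomputable def superchar (_S : SCT G) (X : Finset (G → ℂ)) : G → ℂ := fun g => ∑ χ ∈ X, χ 1 * χ g

/-- The set `Irr(S)` of `S`-characters. -/
def Irr (S : SCT G) : Set (G → ℂ) := {f | ∃ X ∈ S.parts, f = S.superchar X}

end SCT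

/-- The kernel of a character-like function `f : G → ℂ`. -/
def charKer (f : G → ℂ) : Subgroup G where
  carrier := {g | ∀ h, f (g * h) = f h}
  one_mem' := by intro h; simp
  mul_mem' := by intro a b ha hb h; rw [mul_assoc, ha, hb]
  inv_mem' := by
    intro a ha h
    have := ha (a⁻¹ * h)
    rw [mul_inv_cancel_left] at this
    exact this.symm

namespace SCT

/-- `[H,S]`, the subgroup generated by the `g⁻¹k` with `g ∈ H`, `k ∈ Cl_S(g)`. -/
def comm (S : SCT G) (H : Subgroup G) : Subgroup G :=
  Subgroup.closure {x | ∃ g ∈ H, ∃ k ∈ S.cls g, x = g⁻¹ * k}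

/-- `[G,S]`. -/
def derived (S : SCT G) : Subgroup G := S.comm ⊤

/-- `Irr(S | N)`: the `S`-characters whose kernel does not contain `N`. -/
def IrrRel (S : SCT G) (N : Subgroup G) : Set (G → ℂ) :=
  {f | f ∈ S.Irr ∧ ¬ N ≤ charKer f}

/-- `g` is an `S`-Camina element: all of `Irr(S | [G,S])` vanishes at `g`. -/
def IsCaminaElt (S : SCT G) (g : G) : Prop :=
  ∀ f ∈ S.IrrRel S.derived, f g = 0

/-- `N` is `S`-normal: a union of `S`-classes. -/
def IsNormal (S : SCT G) (N : Subgroup G) : Prop :=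
  ∀ g ∈ N, S.cls g ⊆ N

/-- `(G,N)` is a generalised `S`-Camina pair. -/
def IsGCP (S : SCT G) (N : Subgroup G) : Prop :=
  S.IsNormal N ∧ ∀ g : G, g ∉ N → S.IsCaminaElt g

/-- The set `Z(S)` of elements with singleton `S`-class. -/
def centerSet (S : SCT G) : Set G := {g | S.cls g = {g}}

/-- The vanishing-off subgroup `V(S | N)`. -/
def V (S : SCT G) (N : Subgroup G) : Subgroup G :=
  Subgroup.closure {g | ∃ f ∈ S.IrrRel N, f g ≠ 0}

/-- `V(S) = V(S | [G,S])`. -/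
def VS (S : SCT G) : Subgroup G := S.V S.derived

/-- `U(S | N)`: the product of all `S`-normal subgroups `H` with `V(S | H) ≤ N`. -/
def U (S : SCT G) (N : Subgroup G) : Subgroup G :=
  ⨆ (H : Subgroup G) (_ : S.IsNormal H ∧ S.V H ≤ N), H

/-- The upper `S`-central series: `ζ_0 = 1` and `ζ_{i+1}/ζ_i = Z(S^{G/ζ_i})`,
i.e. `ζ_{i+1}` consists of the `g` whose `S`-class maps onto the single coset `gζ_i`. -/
def zeta (S : SCT G) : ℕ → Subgroup G
  | 0 => ⊥
  | i + 1 => Subgroup.closure {g | ∀ k ∈ S.cls g, g⁻¹ * k ∈ S.zeta i}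

/-- The lower `S`-central series `γ_1 = G`, `γ_{i+1} = [γ_i, S]` (with `γ_0 := G`). -/
def gamma (S : SCT G) : ℕ → Subgroup G
  | 0 => ⊤
  | 1 => ⊤
  | n + 2 => S.comm (S.gamma (n + 1))

/-- The series `V_1(S) = V(S)`, `V_{i+1}(S) = [V_i(S), S]` (with `V_0 := V(S)`). -/
def Vseq (S : SCT G) : ℕ → Subgroup G
  | 0 => S.VS
  | 1 => S.VS
  | n + 2 => S.comm (S.Vseq (n + 1))

/-- `G` is a `VZ(S)`-group: every member of `Irr(S | [G,S])` vanishes off `Z(S)`. -/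
def IsVZ (S : SCT G) : Prop :=
  ∀ f ∈ S.IrrRel S.derived, ∀ g : G, g ∉ S.centerSet → f g = 0

end SCT

section SCTProofAux
open CategoryTheory Module
open scoped Classical

namespace SCTAux

variable {G : Type} [Group G] [Fintype G]

lemma myorth (V W : FDRep ℂ G) [Simple V] [Simple W] :
    ∑ g : G, V.character g * W.character g⁻¹ =
      if Nonempty (V ≅ W) then (Fintype.card G : ℂ) else 0 := by
  haveI : Invertible ((Nat.card G : ℂ)) := invertibleOfNonzero
    (Nat.cast_ne_zero.mpr Nat.card_pos.ne')
  have h := FDRep.char_orthonormal (k := ℂ) V W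
  rw [Nat.card_eq_fintype_card] at h
  have h2 : (Fintype.card G : ℂ) ≠ 0 := Nat.cast_ne_zero.mpr Fintype.card_ne_zero
  have h' : (Fintype.card G : ℂ)⁻¹ * ∑ g : G, V.character g * W.character g⁻¹
      = if Nonempty (V ≅ W) then 1 else 0 := h
  have := congrArg (fun z => (Fintype.card G : ℂ) * z) h'
  simp only [← mul_assoc, mul_inv_cancel₀ h2, one_mul] at this
  rw [this]
  split <;> simp

noncomputable def pair (f f' : G → ℂ) : ℂ := ∑ g : G, f g * f' g⁻¹

lemma pair_orth {f f' : G → ℂ} (hf : IsIrrChar G f) (hf' : IsIrrChar G f') :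
    pair f f' = if f = f' then (Fintype.card G : ℂ) else 0 := by
  obtain ⟨V, hV, rfl⟩ := hf
  obtain ⟨W, hW, rfl⟩ := hf'
  haveI := hV; haveI := hW
  by_cases h : V.character = W.character
  · rw [if_pos h, pair, h, myorth W W, if_pos ⟨Iso.refl W⟩]
  · rw [if_neg h, pair, myorth V W, if_neg]
    rintro ⟨i⟩
    exact h (FDRep.char_iso i)

lemma irr_one {f : G → ℂ} (hf : IsIrrChar G f) : ∃ d : ℕ, 0 < d ∧ f 1 = d := by
  obtain ⟨V, hV, rfl⟩ := hf
  haveI := hV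
  refine ⟨finrank ℂ V, ?_, by simp [FDRep.char_one V]⟩
  by_contra h
  push_neg at h
  have h0 : finrank ℂ V = 0 := Nat.le_zero.mp h
  haveI hss : Subsingleton V := (Module.finrank_zero_iff (R := ℂ)).mp h0
  haveI : Subsingleton ((forget (FGModuleCat ℂ)).obj V.V) := hss
  apply CategoryTheory.id_nonzero V
  ext v
  exact Subsingleton.elim _ _

lemma irr_comm {f : G → ℂ} (hf : IsIrrChar G f) (a b : G) : f (a * b) = f (b * a) := by
  obtain ⟨V, hV, rfl⟩ := hf
  exact FDRep.char_mul_comm V b a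

lemma irr_one_ne_zero {f : G → ℂ} (hf : IsIrrChar G f) : f 1 ≠ 0 := by
  obtain ⟨d, hd, hf1⟩ := irr_one hf
  rw [hf1]
  exact_mod_cast hd.ne'

variable (S : SCT G)

lemma irr_of_mem {X : Finset (G → ℂ)} (hX : X ∈ S.parts) {f : G → ℂ} (hf : f ∈ X) :
    IsIrrChar G f := (S.parts_cover f).mpr ⟨X, hX, hf⟩

lemma pair_irr_superchar {χ : G → ℂ} (hχ : IsIrrChar G χ) {Y : Finset (G → ℂ)}
    (hY : Y ∈ S.parts) :
    pair χ (S.superchar Y) = if χ ∈ Y then (Fintype.card G : ℂ) * χ 1 else 0 := by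
  have step : pair χ (S.superchar Y) = ∑ χ' ∈ Y, χ' 1 * pair χ χ' := by
    unfold pair SCT.superchar
    simp_rw [Finset.mul_sum]
    rw [Finset.sum_comm]
    refine Finset.sum_congr rfl fun χ' _ => ?_
    exact Finset.sum_congr rfl fun g _ => by ring
  rw [step]
  have step2 : ∀ χ' ∈ Y, χ' 1 * pair χ χ' = if χ = χ' then χ' 1 * (Fintype.card G : ℂ) else 0 := by
    intro χ' hχ'
    rw [pair_orth hχ (irr_of_mem S hY hχ')]
    split <;> simp
  rw [Finset.sum_congr rfl step2, Finset.sum_ite_eq Y χ (fun χ' => χ' 1 * (Fintype.card G : ℂ))]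
  split <;> ring


lemma pair_fun_superchar (c : G → ℂ) {Y : Finset (G → ℂ)} (hY : Y ∈ S.parts)
    {ι : Type} [Fintype ι] (a : ι → ℂ) (v : ι → G → ℂ)
    (hc : c = ∑ i : ι, a i • v i) :
    pair c (S.superchar Y) = ∑ i : ι, a i * pair (v i) (S.superchar Y) := by
  subst hc
  unfold pair
  have key : ∀ g : G, (∑ i : ι, a i • v i) g * S.superchar Y g⁻¹
      = ∑ i : ι, a i * (v i g * S.superchar Y g⁻¹) := by
    intro g
    rw [Finset.sum_apply, Finset.sum_mul]
    exact Finset.sum_congr rfl fun i _ => by simp [mul_assoc]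
  rw [Finset.sum_congr rfl fun g _ => key g, Finset.sum_comm]
  exact Finset.sum_congr rfl fun i _ => by rw [Finset.mul_sum]

lemma pair_superchar_superchar {X Y : Finset (G → ℂ)} (hX : X ∈ S.parts) (hY : Y ∈ S.parts) :
    pair (S.superchar X) (S.superchar Y) =
      if X = Y then (Fintype.card G : ℂ) * ∑ χ ∈ X, χ 1 * χ 1 else 0 := by
  have step : pair (S.superchar X) (S.superchar Y) = ∑ χ ∈ X, χ 1 * pair χ (S.superchar Y) := by
    unfold pair
    have key : ∀ g : G, S.superchar X g * S.superchar Y g⁻¹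
        = ∑ χ ∈ X, χ 1 * (χ g * S.superchar Y g⁻¹) := by
      intro g
      rw [SCT.superchar, Finset.sum_mul]
      exact Finset.sum_congr rfl fun χ _ => by ring
    rw [Finset.sum_congr rfl fun g _ => key g, Finset.sum_comm]
    exact Finset.sum_congr rfl fun χ _ => by rw [Finset.mul_sum]
  rw [step]
  by_cases h : X = Y
  · subst h
    rw [if_pos rfl, Finset.mul_sum]
    refine Finset.sum_congr rfl fun χ hχ => ?_
    rw [pair_irr_superchar S (irr_of_mem S hX hχ) hX, if_pos hχ]
    ring
  · rw [if_neg h]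
    refine Finset.sum_eq_zero fun χ hχ => ?_
    rw [pair_irr_superchar S (irr_of_mem S hX hχ) hY, if_neg, mul_zero]
    intro hχY
    exact (Finset.disjoint_left.mp (S.parts_disj X hX Y hY h) hχ) hχY

lemma sumsq_ne_zero {Y : Finset (G → ℂ)} (hY : Y ∈ S.parts) :
    (∑ χ ∈ Y, χ 1 * χ 1) ≠ 0 := by
  have h : ∀ χ : {x // x ∈ Y}, ∃ d : ℕ, 0 < d ∧ (χ : G → ℂ) 1 = d :=
    fun χ => irr_one (irr_of_mem S hY χ.2)
  choose d hd hval using h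
  rw [← Finset.sum_attach Y (fun χ => χ 1 * χ 1)]
  have : ∀ χ ∈ Y.attach, (χ : G → ℂ) 1 * (χ : G → ℂ) 1 = ((d χ * d χ : ℕ) : ℂ) := by
    intro χ _
    rw [hval χ]
    push_cast
    ring
  rw [Finset.sum_congr rfl this, ← Nat.cast_sum]
  have hne : Y.attach.Nonempty := Finset.attach_nonempty_iff.mpr (S.parts_nonempty Y hY)
  have : 0 < ∑ χ ∈ Y.attach, d χ * d χ :=
    Finset.sum_pos (fun χ _ => Nat.mul_pos (hd χ) (hd χ)) hne
  exact_mod_cast this.ne'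

/-- The family of supercharacters. -/
noncomputable def σfam : {X // X ∈ S.parts} → (G → ℂ) := fun X => S.superchar ↑X

lemma sigma_indep : LinearIndependent ℂ (σfam S) := by
  rw [Fintype.linearIndependent_iff]
  intro a h Y
  have hpt : ∀ g : G, (∑ X : {X // X ∈ S.parts}, a X * σfam S X g) = 0 := by
    intro g
    have := congrFun h g
    rw [Finset.sum_apply] at this
    simpa using this
  have key : ∑ X : {X // X ∈ S.parts}, a X * pair (σfam S X) (σfam S Y) = 0 := by
    have : ∑ X : {X // X ∈ S.parts}, a X * pair (σfam S X) (σfam S Y)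
        = ∑ g : G, (∑ X : {X // X ∈ S.parts}, a X * σfam S X g) * σfam S Y g⁻¹ := by
      unfold pair
      have key : ∀ X : {X // X ∈ S.parts}, a X * ∑ g : G, σfam S X g * σfam S Y g⁻¹
          = ∑ g : G, a X * σfam S X g * σfam S Y g⁻¹ := by
        intro X
        rw [Finset.mul_sum]
        exact Finset.sum_congr rfl fun g _ => by ring
      rw [Finset.sum_congr rfl fun X _ => key X, Finset.sum_comm]
      exact Finset.sum_congr rfl fun g _ => by rw [Finset.sum_mul]
    rw [this]
    refine Finset.sum_eq_zero fun g _ => ?_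
    rw [hpt g, zero_mul]
  have hterm : ∀ X : {X // X ∈ S.parts},
      a X * pair (σfam S X) (σfam S Y) =
        if X = Y then a X * ((Fintype.card G : ℂ) * ∑ χ ∈ (X : Finset (G → ℂ)), χ 1 * χ 1)
        else 0 := by
    intro X
    rw [σfam, σfam, pair_superchar_superchar S X.2 Y.2]
    by_cases h' : (X : Finset (G → ℂ)) = (Y : Finset (G → ℂ))
    · rw [if_pos h', if_pos (Subtype.ext h')]
    · rw [if_neg h', if_neg (fun hxy => h' (congrArg _ hxy)), mul_zero]
  rw [Finset.sum_congr rfl (fun X _ => hterm X), Finset.sum_ite_eq' Finset.univ Y] at key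
  simp only [Finset.mem_univ, if_true] at key
  rcases mul_eq_zero.mp key with h0 | h0
  · exact h0
  rcases mul_eq_zero.mp h0 with h1 | h1
  · exact absurd h1 (Nat.cast_ne_zero.mpr Fintype.card_ne_zero)
  · exact absurd h1 (sumsq_ne_zero S Y.2)

/-- Functions constant on the S-classes. -/
def constOn (f : G → ℂ) : Prop := ∀ g h : G, h ∈ S.cls g → f h = f g

noncomputable instance : Fintype (Set.range S.cls) := (Set.finite_range S.cls).fintype

/-- The subspace of class-constant functions, as the range of a pullback map. -/
noncomputable def Usub : Submodule ℂ (G → ℂ) :=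
  LinearMap.range (LinearMap.funLeft ℂ ℂ
    (fun g => (⟨S.cls g, g, rfl⟩ : Set.range S.cls)))

lemma mem_Usub {f : G → ℂ} : f ∈ Usub S ↔ constOn S f := by
  constructor
  · rintro ⟨b, rfl⟩ g h hh
    have : (⟨S.cls h, h, rfl⟩ : Set.range S.cls) = ⟨S.cls g, g, rfl⟩ :=
      Subtype.ext (S.cls_eq g h hh)
    simp only [LinearMap.funLeft_apply, this]
  · intro hf
    refine ⟨fun c => f c.2.choose, ?_⟩
    ext g
    have hspec : S.cls (⟨S.cls g, g, rfl⟩ : Set.range S.cls).2.choose = S.cls g :=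
      (⟨S.cls g, g, rfl⟩ : Set.range S.cls).2.choose_spec
    have hg : g ∈ S.cls ((⟨S.cls g, g, rfl⟩ : Set.range S.cls).2.choose) := by
      rw [hspec]; exact S.mem_cls g
    rw [LinearMap.funLeft_apply]
    exact (hf _ g hg).symm

lemma superchar_constOn {X : Finset (G → ℂ)} (hX : X ∈ S.parts) : constOn S (S.superchar X) :=
  fun g h hh => S.const X hX g h hh

lemma span_eq_Usub : Submodule.span ℂ (Set.range (σfam S)) = Usub S := by
  have hle : Submodule.span ℂ (Set.range (σfam S)) ≤ Usub S := by
    rw [Submodule.span_le]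
    rintro - ⟨X, rfl⟩
    exact (mem_Usub S).mpr (superchar_constOn S X.2)
  refine Submodule.eq_of_le_of_finrank_le hle ?_
  have h1 : finrank ℂ (Submodule.span ℂ (Set.range (σfam S))) = S.parts.card := by
    rw [finrank_span_eq_card (sigma_indep S)]
    exact Fintype.card_coe S.parts
  have h2 : finrank ℂ (Usub S) ≤ Fintype.card (Set.range S.cls) := by
    calc finrank ℂ (Usub S) ≤ finrank ℂ ((Set.range S.cls) → ℂ) := LinearMap.finrank_range_le _
    _ = Fintype.card (Set.range S.cls) := by rw [Module.finrank_pi]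
  rw [h1]
  refine h2.trans ?_
  rw [← Nat.card_eq_fintype_card, ← S.card_eq]


lemma pair_sum_right (f : G → ℂ) {ι : Type} [Fintype ι] (a : ι → ℂ) (v : ι → G → ℂ) :
    pair f (∑ i : ι, a i • v i) = ∑ i : ι, a i * pair f (v i) := by
  unfold pair
  have key : ∀ g : G, f g * (∑ i : ι, a i • v i) g⁻¹
      = ∑ i : ι, a i * (f g * v i g⁻¹) := by
    intro g
    rw [Finset.sum_apply, Finset.mul_sum]
    exact Finset.sum_congr rfl fun i _ => by simp; ring
  rw [Finset.sum_congr rfl fun g _ => key g, Finset.sum_comm]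
  exact Finset.sum_congr rfl fun i _ => by rw [Finset.mul_sum]

variable (N : Subgroup G)

/-- The indicator function of `N`. -/
noncomputable def oneN : G → ℂ := fun g => if g ∈ N then 1 else 0

lemma oneN_constOn (hN : S.IsNormal N) : constOn S (oneN N) := by
  intro g h hh
  unfold oneN
  by_cases hg : g ∈ N
  · have hh2 : h ∈ N := hN g hg hh
    simp [hg, hh2]
  · have hh' : h ∉ N := fun hhN => hg (hN h hhN ((S.cls_eq g h hh).symm ▸ S.mem_cls g))
    simp [hg, hh']

lemma exists_expansion (hN : S.IsNormal N) : ∃ a : {X // X ∈ S.parts} → ℂ,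
    ∑ X : {X // X ∈ S.parts}, a X • σfam S X = oneN N := by
  have h : oneN N ∈ Submodule.span ℂ (Set.range (σfam S)) := by
    rw [span_eq_Usub]
    exact (mem_Usub S).mpr (oneN_constOn S N hN)
  exact (Submodule.mem_span_range_iff_exists_fun ℂ).mp h

lemma oneN_comm (hN : S.IsNormal N) (x y : G) : oneN N (x * y) = oneN N (y * x) := by
  obtain ⟨a, ha⟩ := exists_expansion S N hN
  rw [← ha, Finset.sum_apply, Finset.sum_apply]
  refine Finset.sum_congr rfl fun X _ => ?_
  simp only [Pi.smul_apply, smul_eq_mul]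
  congr 1
  show S.superchar ↑X (x * y) = S.superchar ↑X (y * x)
  unfold SCT.superchar
  refine Finset.sum_congr rfl fun χ hχ => ?_
  rw [irr_comm (irr_of_mem S X.2 hχ) x y]

lemma conj_mem_of_SNormal (hN : S.IsNormal N) (g n : G) (hn : n ∈ N) : g * n * g⁻¹ ∈ N := by
  have h2 : oneN N (g * n * g⁻¹) = oneN N n := by
    rw [mul_assoc, oneN_comm S N hN g (n * g⁻¹), inv_mul_cancel_right]
  by_contra hmem
  rw [oneN, oneN, if_neg hmem, if_pos hn] at h2
  exact zero_ne_one h2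

lemma chi_ker (hN : S.IsNormal N)
    (a : {X // X ∈ S.parts} → ℂ) (ha : ∑ X : {X // X ∈ S.parts}, a X • σfam S X = oneN N)
    (X : {X // X ∈ S.parts}) (haX : a X ≠ 0)
    {χ : G → ℂ} (hχ : χ ∈ (X : Finset (G → ℂ))) :
    ∀ n ∈ N, ∀ h : G, χ (n * h) = χ h := by
  classical
  obtain ⟨V, hVs, hVc⟩ := irr_of_mem S X.2 hχ
  haveI := hVs
  have hχ1 : χ 1 ≠ 0 := irr_one_ne_zero (irr_of_mem S X.2 hχ)
  set φlin : V →ₗ[ℂ] V := ∑ n : ↥N, V.ρ (n : G) with hφdef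
  -- `ρ n` fixes `φlin`
  have hfix : ∀ n : ↥N, V.ρ (n : G) ∘ₗ φlin = φlin := by
    intro n
    ext v
    simp only [hφdef, LinearMap.comp_apply, LinearMap.coe_sum, Finset.sum_apply, map_sum]
    refine Fintype.sum_equiv (Equiv.mulLeft n) _ _ fun m => ?_
    show V.ρ (n : G) (V.ρ (m : G) v) = V.ρ ((n * m : ↥N) : G) v
    rw [Subgroup.coe_mul, map_mul]
    rfl
  -- equivariance
  have hcomm : ∀ g : G, φlin ∘ₗ V.ρ g = V.ρ g ∘ₗ φlin := by
    intro g
    ext v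
    simp only [hφdef, LinearMap.comp_apply, LinearMap.coe_sum, Finset.sum_apply, map_sum]
    let e : ↥N ≃ ↥N :=
      ⟨fun n => ⟨g⁻¹ * (n : G) * g, by simpa using conj_mem_of_SNormal S N hN g⁻¹ n n.2⟩,
       fun n => ⟨g * (n : G) * g⁻¹, conj_mem_of_SNormal S N hN g n n.2⟩,
       fun n => Subtype.ext (by show g * (g⁻¹ * (n : G) * g) * g⁻¹ = (n : G); group),
       fun n => Subtype.ext (by show g⁻¹ * (g * (n : G) * g⁻¹) * g = (n : G); group)⟩
    refine Fintype.sum_equiv e _ _ fun n => ?_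
    show V.ρ (n : G) (V.ρ g v) = V.ρ g (V.ρ (g⁻¹ * (n : G) * g) v)
    have hgr : g * (g⁻¹ * (n : G) * g) = (n : G) * g := by group
    calc V.ρ (n : G) (V.ρ g v) = V.ρ ((n : G) * g) v := by rw [map_mul]; rfl
    _ = V.ρ (g * (g⁻¹ * (n : G) * g)) v := by rw [hgr]
    _ = V.ρ g (V.ρ (g⁻¹ * (n : G) * g) v) := by rw [map_mul]; rfl
  set φ : V ⟶ V := ⟨InducedCategory.homMk (ModuleCat.ofHom φlin), fun g => by
    ext v; exact LinearMap.congr_fun (hcomm g) v⟩ with hφ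
  obtain ⟨c, hc⟩ := CategoryTheory.endomorphism_simple_eq_smul_id (C := FDRep ℂ G) ℂ φ
  have hhom : φlin = c • LinearMap.id := by
    ext v
    have := congrArg (fun f : V ⟶ V => f.hom.hom.hom v) hc
    exact this.symm
  -- trace facts
  have hchar : ∀ g : G, χ g = LinearMap.trace ℂ V (V.ρ g) := by
    intro g
    rw [← hVc]
    rfl
  have hfin : χ 1 = (finrank ℂ V : ℂ) := by rw [← hVc]; exact FDRep.char_one V
  have htr : ∑ n : ↥N, χ (n : G) = c * χ 1 := by
    have h1 : ∑ n : ↥N, χ (n : G) = LinearMap.trace ℂ V φlin := by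
      rw [hφdef, map_sum]
      exact Finset.sum_congr rfl fun n _ => hchar (n : G)
    rw [h1, hhom, map_smul, LinearMap.trace_id, smul_eq_mul, hfin]
  -- the pairing link
  have hpair : ∑ n : ↥N, χ (n : G) = a X * ((Fintype.card G : ℂ) * χ 1) := by
    have h1 : pair χ (oneN N) = ∑ n : ↥N, χ (n : G) := by
      unfold pair oneN
      have h2 : ∀ g : G, (χ g * if g⁻¹ ∈ N then 1 else 0) = if g ∈ N then χ g else 0 := by
        intro g
        by_cases hg : g ∈ N <;> simp [hg, inv_mem_iff]
      rw [Finset.sum_congr rfl fun g _ => h2 g, ← Finset.sum_filter]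
      exact Finset.sum_subtype _ (by simp) χ
    have h3 : pair χ (oneN N) = a X * ((Fintype.card G : ℂ) * χ 1) := by
      rw [← ha, pair_sum_right]
      have h4 : ∀ Y : {X // X ∈ S.parts},
          a Y * pair χ (σfam S Y) =
            if Y = X then a Y * ((Fintype.card G : ℂ) * χ 1) else 0 := by
        intro Y
        rw [σfam, pair_irr_superchar S (irr_of_mem S X.2 hχ) Y.2]
        by_cases hYX : Y = X
        · rw [if_pos hYX, if_pos (hYX ▸ hχ)]
        · rw [if_neg hYX, if_neg, mul_zero]
          intro hχY
          exact Finset.disjoint_left.mp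
            (S.parts_disj Y.1 Y.2 X.1 X.2 (fun h => hYX (Subtype.ext h))) hχY hχ
      rw [Finset.sum_congr rfl fun Y _ => h4 Y, Finset.sum_ite_eq' Finset.univ X]
      simp
    rw [← h1, h3]
  -- conclude c = |N|
  have hcval : c = a X * (Fintype.card G : ℂ) := by
    have h5 := htr.symm.trans hpair
    have h6 : c * χ 1 = a X * (Fintype.card G : ℂ) * χ 1 := by rw [h5]; ring
    exact mul_right_cancel₀ hχ1 h6
  have hc0 : c ≠ 0 := by
    rw [hcval]
    exact mul_ne_zero haX (Nat.cast_ne_zero.mpr Fintype.card_ne_zero)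
  -- every ρ n is the identity
  have hρ : ∀ n : ↥N, V.ρ (n : G) = LinearMap.id := by
    intro n
    have h1 := hfix n
    rw [hhom, LinearMap.comp_smul, LinearMap.comp_id] at h1
    exact smul_right_injective (V →ₗ[ℂ] V) hc0 h1
  intro n hn h
  rw [hchar (n * h), hchar h, map_mul]
  have hid : V.ρ n = LinearMap.id := hρ ⟨n, hn⟩
  rw [hid, ← Module.End.one_eq_id, one_mul]

lemma superchar_ker (hN : S.IsNormal N)
    (a : {X // X ∈ S.parts} → ℂ) (ha : ∑ X : {X // X ∈ S.parts}, a X • σfam S X = oneN N)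
    (X : {X // X ∈ S.parts}) (haX : a X ≠ 0) :
    N ≤ charKer (S.superchar ↑X) := by
  intro n hn
  intro h
  show S.superchar ↑X (n * h) = S.superchar ↑X h
  unfold SCT.superchar
  refine Finset.sum_congr rfl fun χ hχ => ?_
  rw [chi_ker S N hN a ha X haX hχ n hn h]

/-- The key fact: an `S`-normal subgroup is the intersection of the supercharacter kernels
containing it. -/
lemma mem_of_forall_ker (hN : S.IsNormal N) (g : G)
    (hg : ∀ X ∈ S.parts, N ≤ charKer (S.superchar X) → g ∈ charKer (S.superchar X)) :
    g ∈ N := by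
  obtain ⟨a, ha⟩ := exists_expansion S N hN
  have h1 : oneN N g = oneN N 1 := by
    rw [← ha, Finset.sum_apply, Finset.sum_apply]
    refine Finset.sum_congr rfl fun X _ => ?_
    simp only [Pi.smul_apply, smul_eq_mul]
    by_cases haX : a X = 0
    · rw [haX, zero_mul, zero_mul]
    · congr 1
      have hker := hg X.1 X.2 (superchar_ker S N hN a ha X haX)
      have := hker 1
      rw [mul_one] at this
      exact this
  rw [oneN, oneN, if_pos (one_mem N)] at h1
  by_contra hmem
  rw [if_neg hmem] at h1
  exact zero_ne_one h1

end SCTAux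
end SCTProofAux
/-- for `S`-normal `M`, `N`: `M ≤ N ↔ Irr(S|M) ⊆ Irr(S|N)`. -/
theorem le_iff_irrRel_subset (S : SCT G) (M N : Subgroup G)
    (hM : S.IsNormal M) (hN : S.IsNormal N) :
    M ≤ N ↔ S.IrrRel M ⊆ S.IrrRel N := by
  constructor
  · intro hMN f hf
    exact ⟨hf.1, fun hker => hf.2 (hMN.trans hker)⟩
  · intro hsub g hg
    refine SCTAux.mem_of_forall_ker S N hN g ?_
    intro X hX hker
    have hirr : S.superchar X ∈ S.Irr := ⟨X, hX, rfl⟩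
    by_cases hMker : M ≤ charKer (S.superchar X)
    · exact hMker hg
    · exact absurd hker (hsub ⟨hirr, hMker⟩).2
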